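/- Let c : ℝ → ℝ be a differentiable, strictly increasing bijection with c' > 0 everywhere whose derivative c' is strictly decreasing (c strictly concave), and let q ∈ (0,1). Define ℓ_B(σ) = c⁻¹(c(σ) − 1) and ℓ_A(σ) = c⁻¹(c(σ) − 1/q) (these are the minimum unmanipulated features reaching σ at cost 1 under costs c_B = c and c_A = q·c respectively). Then the function σ ↦ ℓ_B(σ) − ℓ_A(σ) is strictly increasing on ℝ; consequently, when unmanipulated features are uniformly distributed for both groups, the error-minimizing threshold in [σ_B, σ_A] is σ* = σ_B. -/

import Mathlib

private lemma incr_strictAnti (c c' : ℝ → ℝ)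
    (hderiv : ∀ x, HasDerivAt c (c' x) x)
    (hconcave : StrictAnti c') (d : ℝ) (hd : 0 < d) :
    StrictAnti (fun x => c (x + d) - c x) := by
  apply strictAnti_of_deriv_neg
  intro x
  have h1 : HasDerivAt (fun x => c (x + d)) (c' (x + d)) x := by
    have := (hderiv (x + d)).comp x ((hasDerivAt_id x).add_const d)
    rw [mul_one] at this
    exact this
  have h2 : HasDerivAt (fun x => c (x + d) - c x) (c' (x + d) - c' x) x :=
    h1.sub (hderiv x)
  rw [h2.deriv]
  have : c' (x + d) < c' x := hconcave (by linarith)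
  linarith

/-- With strictly concave costs (c' strictly decreasing) and proportional
group costs c_A = q·c (q ∈ (0,1)), the error interval length ℓ_B(σ) − ℓ_A(σ) is strictly
increasing in σ; consequently under uniform feature distributions the error-minimizing
threshold in [σ_B, σ_A] is σ_B. -/
theorem concave_costs_optimal_sigmaB (c c' : ℝ → ℝ)
    (hderiv : ∀ x, HasDerivAt c (c' x) x)
    (hpos : ∀ x, 0 < c' x)
    (hmono : StrictMono c) (hbij : Function.Bijective c)
    (hconcave : StrictAnti c')
    (q : ℝ) (hq : q ∈ Set.Ioo (0 : ℝ) 1)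
    (ℓB ℓA : ℝ → ℝ)
    (hℓB : ∀ σ, ℓB σ = Function.invFun c (c σ - 1))
    (hℓA : ∀ σ, ℓA σ = Function.invFun c (c σ - 1 / q)) :
    StrictMono (fun σ => ℓB σ - ℓA σ) ∧
    ∀ σB σA : ℝ, σB ≤ σA → ∀ σ ∈ Set.Icc σB σA,
      ℓB σB - ℓA σB ≤ ℓB σ - ℓA σ := by
  obtain ⟨hq0, hq1⟩ := hq
  have hrinv : ∀ y, c (Function.invFun c y) = y :=
    Function.rightInverse_invFun hbij.2
  have hcB : ∀ σ, c (ℓB σ) = c σ - 1 := fun σ => by rw [hℓB σ, hrinv]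
  have hcA : ∀ σ, c (ℓA σ) = c σ - 1 / q := fun σ => by rw [hℓA σ, hrinv]
  have hk : (1 : ℝ) < 1 / q := by rw [lt_div_iff₀ hq0]; linarith
  have hSM : StrictMono (fun σ => ℓB σ - ℓA σ) := by
    intro σ1 σ2 h12
    set a := ℓA σ1; set b := ℓB σ1; set a' := ℓA σ2; set b' := ℓB σ2
    have hab : a < b := by
      have : c a < c b := by rw [hcA, hcB]; linarith
      exact hmono.lt_iff_lt.mp this
    have haa' : a < a' := by
      have : c a < c a' := by rw [hcA, hcA]; linarith [hmono h12]
      exact hmono.lt_iff_lt.mp this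
    set d := b - a with hdd
    have hd : 0 < d := sub_pos.mpr hab
    have key := incr_strictAnti c c' hderiv hconcave d hd haa'
    -- key : c (a' + d) - c a' < c (a + d) - c a
    have had : a + d = b := by ring
    have hval : c (a' + d) < c b' := by
      have h1 : c (a + d) - c a = 1 / q - 1 := by
        rw [had, hcB, hcA]; ring
      have h2 : c b' - c a' = 1 / q - 1 := by rw [hcB, hcA]; ring
      have h3 : c (a' + d) - c a' < c (a + d) - c a := key
      rw [h1] at h3
      linarith
    have : a' + d < b' := hmono.lt_iff_lt.mp hval
    simp only []
    linarith
  refine ⟨hSM, fun σB σA _ σ hσ => ?_⟩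
  exact hSM.monotone hσ.1
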